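/- arXiv:2310.01883 — 5 statements merged into one kernel-verified Lean document; each statement's English description precedes it below -/
import Mathlib

section
/- Let C₁, C₂ be disjoint nonempty finite sets of words in a mixed Hamming space, and suppose the minimum distance between C₁ and C₂ is d' > d ≥ 1. Then there exist w ∈ C₁, w' ∈ C₂ with d(w,w') = d', and for any coordinate j where w[j] ≠ w'[j], applying to every element of C₂ the transposition swapping the symbols w[j] and w'[j] at coordinate j produces a set C₂' such that the minimum distance between C₁ and C₂' is at least d' − 1, all pairwise distances within C₂' equal those within C₂, and d(w, σ(w')) = d' − 1. -/
open Finset in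
private lemma ham_split {n : ℕ} {A : Fin n → Type} [∀ j, DecidableEq (A j)]
    (x y : ∀ j, A j) (j : Fin n) :
    hammingDist x y
      = ((univ.erase j).filter fun i => x i ≠ y i).card + (if x j = y j then 0 else 1) := by
  rw [hammingDist]
  have h : (univ : Finset (Fin n)) = insert j (univ.erase j) :=
    (insert_erase (mem_univ j)).symm
  conv_lhs => rw [h, filter_insert]
  by_cases hxy : x j = y j
  · simp [hxy]
  · rw [if_pos hxy, card_insert_of_notMem (by simp), if_neg hxy]

open Finset in
private lemma off_update {n : ℕ} {A : Fin n → Type} [∀ j, DecidableEq (A j)]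
    (x y : ∀ j, A j) (j : Fin n) (a : A j) :
    ((univ.erase j).filter fun i => x i ≠ Function.update y j a i)
      = ((univ.erase j).filter fun i => x i ≠ y i) := by
  apply filter_congr
  intro i hi
  rw [Function.update_of_ne (mem_erase.mp hi).1]

open Finset in
private lemma off_update' {n : ℕ} {A : Fin n → Type} [∀ j, DecidableEq (A j)]
    (x y : ∀ j, A j) (j : Fin n) (a b : A j) :
    ((univ.erase j).filter fun i => Function.update x j a i ≠ Function.update y j b i)
      = ((univ.erase j).filter fun i => x i ≠ y i) := by
  apply filter_congr
  intro i hi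
  rw [Function.update_of_ne (mem_erase.mp hi).1, Function.update_of_ne (mem_erase.mp hi).1]

/-- Let `C₁, C₂` be disjoint nonempty finite sets of words with cross minimum distance
`d' > d ≥ 1`. Then there is a closest pair `w ∈ C₁`, `w' ∈ C₂` with `d(w,w') = d'`, and for
any coordinate `j` where they differ, the transposition `σ` swapping `w j` and `w' j` at
coordinate `j`, applied to `C₂`, keeps all cross distances ≥ d' − 1, preserves all pairwise
distances within `C₂`, and satisfies `d(w, σ w') = d' − 1`. -/
theorem closest_pair_swap_reduction {n : ℕ} (A : Fin n → Type) [∀ j, Fintype (A j)]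
    [∀ j, DecidableEq (A j)] (d d' : ℕ) (hd : 1 ≤ d) (hdd' : d < d')
    (C₁ C₂ : Finset (∀ j, A j)) (hdisj : Disjoint C₁ C₂)
    (h₁ : C₁.Nonempty) (h₂ : C₂.Nonempty)
    (hlow : ∀ w ∈ C₁, ∀ w' ∈ C₂, d' ≤ hammingDist w w')
    (hach : ∃ w ∈ C₁, ∃ w' ∈ C₂, hammingDist w w' = d') :
    ∃ w ∈ C₁, ∃ w' ∈ C₂, hammingDist w w' = d' ∧
      ∀ j : Fin n, w j ≠ w' j →
        (∀ u ∈ C₁, ∀ v ∈ C₂,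
          d' - 1 ≤ hammingDist u (Function.update v j (Equiv.swap (w j) (w' j) (v j)))) ∧
        (∀ v ∈ C₂, ∀ v' ∈ C₂,
          hammingDist (Function.update v j (Equiv.swap (w j) (w' j) (v j)))
              (Function.update v' j (Equiv.swap (w j) (w' j) (v' j)))
            = hammingDist v v') ∧
        hammingDist w (Function.update w' j (Equiv.swap (w j) (w' j) (w' j))) = d' - 1 := by
  obtain ⟨w, hw, w', hw', heq⟩ := hach
  refine ⟨w, hw, w', hw', heq, ?_⟩
  intro j hj
  refine ⟨?_, ?_, ?_⟩
  · intro u hu v hv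
    have h1 := ham_split u v j
    have h2 := ham_split u (Function.update v j (Equiv.swap (w j) (w' j) (v j))) j
    rw [off_update] at h2
    have hl := hlow u hu v hv
    rw [h1] at hl
    rw [h2]
    split_ifs at hl ⊢ <;> omega
  · intro v hv v' hv'
    rw [ham_split v v' j,
      ham_split (Function.update v j (Equiv.swap (w j) (w' j) (v j)))
        (Function.update v' j (Equiv.swap (w j) (w' j) (v' j))) j, off_update']
    congr 1
    simp only [Function.update_self]
    simp [Equiv.apply_eq_iff_eq]
  · have h2 := ham_split w (Function.update w' j (Equiv.swap (w j) (w' j) (w' j))) j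
    rw [off_update] at h2
    rw [ham_split w w' j, if_neg hj] at heq
    rw [h2, Function.update_self, Equiv.swap_apply_right, if_pos rfl]
    omega
end

section
/- Every Hamming packing C (a finite code with minimum distance exactly d) in a mixed Hamming space can be transformed into a code C' of the same cardinality, with minimum pairwise distance at least d, such that the contact graph of C' (edges between codewords at distance exactly d) is connected. -/
/-- The contact graph of a code `C` with respect to distance `d`. -/
def contactGraph {n : ℕ} {A : Fin n → Type} [∀ j, DecidableEq (A j)]
    (C : Finset (∀ j, A j)) (d : ℕ) : SimpleGraph C where
  Adj a b := a ≠ b ∧ hammingDist (a : ∀ j, A j) (b : ∀ j, A j) = d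
  symm := by
    constructor
    rintro a b ⟨h1, h2⟩
    exact ⟨h1.symm, by rwa [hammingDist_comm]⟩
  loopless := ⟨fun a h => h.1 rfl⟩

section
set_option linter.unusedSectionVars false
variable {n : ℕ} {A : Fin n → Type} [∀ j, Fintype (A j)] [∀ j, DecidableEq (A j)]

def swapAt (j : Fin n) (s t : A j) (x : ∀ i, A i) : ∀ i, A i :=
  Function.update x j (Equiv.swap s t (x j))

lemma swapAt_dist (j : Fin n) (s t : A j) (x y : ∀ i, A i) :
    hammingDist (swapAt j s t x) (swapAt j s t y) = hammingDist x y := by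
  simp only [hammingDist]
  congr 1
  apply Finset.filter_congr
  intro i _
  rcases eq_or_ne i j with rfl | h
  · simp [swapAt, Function.update_self, (Equiv.swap s t).injective.ne_iff]
  · simp [swapAt, Function.update_of_ne h]

lemma swapAt_dist_self (j : Fin n) (s t : A j) (x : ∀ i, A i) :
    hammingDist (swapAt j s t x) x ≤ 1 := by
  have h : (Finset.univ.filter fun i => swapAt j s t x i ≠ x i) ⊆ {j} := by
    intro i hi
    simp only [Finset.mem_filter] at hi
    simp only [Finset.mem_singleton]
    by_contra h
    exact hi.2 (by simp [swapAt, Function.update_of_ne h])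
  calc hammingDist (swapAt j s t x) x = _ := rfl
    _ ≤ ({j} : Finset (Fin n)).card := Finset.card_le_card h
    _ = 1 := rfl

lemma swapAt_dist_lower (j : Fin n) (s t : A j) (x y : ∀ i, A i) :
    hammingDist x y ≤ hammingDist (swapAt j s t x) y + 1 := by
  calc hammingDist x y ≤ hammingDist x (swapAt j s t x) + hammingDist (swapAt j s t x) y :=
        hammingDist_triangle _ _ _
    _ ≤ 1 + hammingDist (swapAt j s t x) y := by
        rw [hammingDist_comm]; exact Nat.add_le_add_right (swapAt_dist_self j s t x) _
    _ = _ := by omega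

lemma swapAt_dist_drop (j : Fin n) (x y : ∀ i, A i) (hj : x j ≠ y j) :
    hammingDist (swapAt j (x j) (y j) x) y + 1 = hammingDist x y := by
  have hmem : j ∈ Finset.univ.filter fun i => x i ≠ y i := by simp [hj]
  have h : (Finset.univ.filter fun i => swapAt j (x j) (y j) x i ≠ y i)
      = (Finset.univ.filter fun i => x i ≠ y i).erase j := by
    ext i
    rcases eq_or_ne i j with rfl | h
    · simp [swapAt, Function.update_self, Equiv.swap_apply_left]
    · simp [swapAt, Function.update_of_ne h, h]
  show (Finset.univ.filter fun i => swapAt j (x j) (y j) x i ≠ y i).card + 1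
      = (Finset.univ.filter fun i => x i ≠ y i).card
  rw [h, Finset.card_erase_of_mem hmem]
  have : 1 ≤ (Finset.univ.filter fun i => x i ≠ y i).card := Finset.card_pos.2 ⟨j, hmem⟩
  omega

/-- number of (ordered) unreachable pairs in the contact graph -/
noncomputable def ucard (d : ℕ) (E : Finset (∀ j, A j)) : ℕ :=
  {p : ↥E × ↥E | ¬ (contactGraph E d).Reachable p.1 p.2}.ncard

/-- the set of distances between unreachable pairs -/
def crossSet (d : ℕ) (E : Finset (∀ j, A j)) : Set ℕ :=
  {k | ∃ x y : ↥E, ¬ (contactGraph E d).Reachable x y ∧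
    hammingDist (x : ∀ i, A i) (y : ∀ i, A i) = k}

noncomputable def minCross (d : ℕ) (E : Finset (∀ j, A j)) : ℕ := sInf (crossSet d E)

lemma minCross_le (d : ℕ) (E : Finset (∀ j, A j)) : minCross d E ≤ n := by
  rcases Set.eq_empty_or_nonempty (crossSet d E) with he | hne
  · simp [minCross, he, Nat.sInf_empty]
  · obtain ⟨x, y, -, hk⟩ := Nat.sInf_mem hne
    calc minCross d E = _ := hk.symm
      _ ≤ Fintype.card (Fin n) := hammingDist_le_card_fintype
      _ = n := Fintype.card_fin n

noncomputable def measCG (d : ℕ) (E : Finset (∀ j, A j)) : ℕ :=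
  ucard d E * (n + 1) + minCross d E

lemma step (d : ℕ) (hd : 0 < d) (C' : Finset (∀ j, A j)) (hne : C'.Nonempty)
    (hP : ∀ a ∈ C', ∀ b ∈ C', a ≠ b → d ≤ hammingDist a b)
    (hnc : ¬ (contactGraph C' d).Connected) :
    ∃ C'' : Finset (∀ j, A j), C''.card = C'.card ∧
      (∀ a ∈ C'', ∀ b ∈ C'', a ≠ b → d ≤ hammingDist a b) ∧
      measCG d C'' < measCG d C' := by
  classical
  haveI : Nonempty ↥C' := Finset.nonempty_coe_sort.2 hne
  set G := contactGraph C' d with hG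
  have hAdjIff : ∀ x y : ↥C',
      G.Adj x y ↔ (x ≠ y ∧ hammingDist (x : ∀ i, A i) (y : ∀ i, A i) = d) := by
    rw [hG]; exact fun x y => Iff.rfl
  have hpre : ¬ G.Preconnected := fun h => hnc ⟨h⟩
  obtain ⟨x0, hx0⟩ := not_forall.1 hpre
  obtain ⟨y0, hxy0⟩ := not_forall.1 hx0
  have hDSne : (crossSet d C').Nonempty := ⟨_, x0, y0, hxy0, rfl⟩
  obtain ⟨u, v, huv, hDuv⟩ := Nat.sInf_mem hDSne
  set D := sInf (crossSet d C') with hDdef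
  have hminD : minCross d C' = D := by rw [minCross, hDdef]
  have hune : (u : ∀ i, A i) ≠ (v : ∀ i, A i) := by
    intro h
    exact huv (Subtype.ext h ▸ SimpleGraph.Reachable.refl u)
  have huvne : u ≠ v := fun h => hune (congrArg _ h)
  have hD1 : d + 1 ≤ D := by
    have hge : d ≤ D := hDuv ▸ hP _ u.2 _ v.2 hune
    rcases eq_or_lt_of_le hge with heq | hlt
    · exact absurd (SimpleGraph.Adj.reachable
        ((hAdjIff u v).mpr ⟨huvne, hDuv.trans heq.symm⟩)) huv
    · omega
  obtain ⟨j, hj⟩ := Function.ne_iff.1 hune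
  set g : (∀ i, A i) → ∀ i, A i := swapAt j ((u : ∀ i, A i) j) ((v : ∀ i, A i) j) with hg
  set Mv : ↥C' → Prop := fun x => G.Reachable x u with hMv
  set f : (∀ i, A i) → ∀ i, A i :=
    fun x => if h : ∃ hx : x ∈ C', G.Reachable ⟨x, hx⟩ u then g x else x with hf
  have hfMv : ∀ x : ↥C', Mv x → f x = g x := fun x hx => dif_pos ⟨x.2, hx⟩
  have hfnMv : ∀ x : ↥C', ¬ Mv x → f x = x := by
    intro x hx
    refine dif_neg ?_
    rintro ⟨h1, h2⟩
    exact hx h2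
  have hcross : ∀ x y : ↥C', Mv x → ¬ Mv y →
      D ≤ hammingDist (x : ∀ i, A i) (y : ∀ i, A i) ∧ ¬ G.Reachable x y := by
    intro x y hx hy
    have hr : ¬ G.Reachable x y := fun h => hy (h.symm.trans hx)
    exact ⟨Nat.sInf_le ⟨x, y, hr, rfl⟩, hr⟩
  have hsame : ∀ x y : ↥C', (Mv x ↔ Mv y) →
      hammingDist (f x) (f y) = hammingDist (x : ∀ i, A i) (y : ∀ i, A i) := by
    intro x y hiff
    by_cases h : Mv x
    · rw [hfMv x h, hfMv y (hiff.1 h)]; exact swapAt_dist _ _ _ _ _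
    · rw [hfnMv x h, hfnMv y (fun h' => h (hiff.2 h'))]
  have hmix : ∀ x y : ↥C', Mv x → ¬ Mv y →
      D - 1 ≤ hammingDist (f x) (f y) ∧ ¬ G.Reachable x y := by
    intro x y hx hy
    obtain ⟨hD', hr⟩ := hcross x y hx hy
    rw [hfMv x hx, hfnMv y hy]
    have := swapAt_dist_lower j ((u : ∀ i, A i) j) ((v : ∀ i, A i) j) (x : ∀ i, A i) y
    rw [← hg] at this
    exact ⟨by omega, hr⟩
  have hPdist : ∀ x y : ↥C', x ≠ y → d ≤ hammingDist (f x) (f y) := by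
    intro x y hne'
    have hxyd : d ≤ hammingDist (x : ∀ i, A i) (y : ∀ i, A i) :=
      hP _ x.2 _ y.2 (fun h => hne' (Subtype.ext h))
    by_cases hx : Mv x <;> by_cases hy : Mv y
    · rw [hsame x y (iff_of_true hx hy)]; exact hxyd
    · have := (hmix x y hx hy).1; omega
    · have := (hmix y x hy hx).1; rw [hammingDist_comm]; omega
    · rw [hsame x y (iff_of_false hx hy)]; exact hxyd
  have hfinj : Set.InjOn f ↑C' := by
    intro a ha b hb hfab
    by_contra hne'
    have h2 := hPdist ⟨a, ha⟩ ⟨b, hb⟩ (fun h => hne' (congrArg Subtype.val h))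
    simp only [hfab, hammingDist_self] at h2
    omega
  set C'' := C'.image f with hC''
  have hcard : C''.card = C'.card := Finset.card_image_of_injOn hfinj
  have hP'' : ∀ a ∈ C'', ∀ b ∈ C'', a ≠ b → d ≤ hammingDist a b := by
    intro a ha b hb hab
    obtain ⟨x, hx, rfl⟩ := Finset.mem_image.1 ha
    obtain ⟨y, hy, rfl⟩ := Finset.mem_image.1 hb
    exact hPdist ⟨x, hx⟩ ⟨y, hy⟩ (fun h => hab (congrArg f (congrArg Subtype.val h)))
  set F : ↥C' → ↥C'' := fun x => ⟨f x, Finset.mem_image_of_mem f x.2⟩ with hF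
  have hFinj : Function.Injective F := fun a b h =>
    Subtype.ext (hfinj a.2 b.2 (congrArg Subtype.val h))
  have hFsurj : Function.Surjective F := by
    rintro ⟨b, hb⟩
    obtain ⟨x, hx, rfl⟩ := Finset.mem_image.1 hb
    exact ⟨⟨x, hx⟩, rfl⟩
  have hAdjF : ∀ x y : ↥C', G.Adj x y → (contactGraph C'' d).Adj (F x) (F y) := by
    intro x y hadj
    obtain ⟨hne', hdd⟩ := (hAdjIff x y).mp hadj
    have hr : G.Reachable x y := SimpleGraph.Adj.reachable hadj
    have hiff : Mv x ↔ Mv y := ⟨fun h => hr.symm.trans h, fun h => hr.trans h⟩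
    refine ⟨fun h => hne' (hFinj h), ?_⟩
    show hammingDist (f x) (f y) = d
    rw [hsame x y hiff]; exact hdd
  have hRmap : ∀ x y : ↥C', G.Reachable x y → (contactGraph C'' d).Reachable (F x) (F y) :=
    fun x y h => h.map (⟨F, fun {a b} hh => hAdjF a b hh⟩ : G →g contactGraph C'' d)
  set U' : Set (↥C' × ↥C') := {p | ¬ G.Reachable p.1 p.2} with hU'
  set T : Set (↥C' × ↥C') := {p | ¬ (contactGraph C'' d).Reachable (F p.1) (F p.2)} with hT
  have hTU : T ⊆ U' := fun p hp hr => hp (hRmap _ _ hr)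
  have hUT : {p : ↥C'' × ↥C'' | ¬ (contactGraph C'' d).Reachable p.1 p.2}
      = Prod.map F F '' T := by
    ext ⟨q1, q2⟩
    constructor
    · intro hq
      obtain ⟨x, rfl⟩ := hFsurj q1
      obtain ⟨y, rfl⟩ := hFsurj q2
      exact ⟨(x, y), hq, rfl⟩
    · rintro ⟨⟨p1, p2⟩, hp, heq⟩
      obtain ⟨h1, h2⟩ := Prod.mk.injEq .. ▸ heq
      subst h1; subst h2
      exact hp
  have hU''card : ucard d C'' = T.ncard := by
    rw [ucard, hUT]
    exact Set.ncard_image_of_injective _ (hFinj.prodMap hFinj)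
  have hfu : f u = g u := hfMv u (SimpleGraph.Reachable.refl u)
  have hvnMv : ¬ Mv v := fun h => huv h.symm
  have hfv : f v = (v : ∀ i, A i) := hfnMv v hvnMv
  have hguv : hammingDist (g u) (v : ∀ i, A i) + 1 = D := by
    rw [hg, swapAt_dist_drop j _ _ hj]; exact hDuv
  rcases eq_or_lt_of_le hD1 with hcase | hcase
  · -- Case A : D = d + 1, a new edge appears
    have hadj'' : (contactGraph C'' d).Adj (F u) (F v) := by
      refine ⟨fun h => huvne (hFinj h), ?_⟩
      show hammingDist (f u) (f v) = d
      rw [hfu, hfv]; omega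
    have huvT : (u, v) ∉ T := fun h => h hadj''.reachable
    have hss : T ⊂ U' := ssubset_of_subset_of_ne hTU (fun h => huvT (h ▸ huv))
    have hlt : ucard d C'' < ucard d C' := by
      rw [hU''card]
      exact Set.ncard_lt_ncard hss (Set.toFinite _)
    refine ⟨C'', hcard, hP'', ?_⟩
    have hmc := minCross_le d C''
    have h1 : (ucard d C'' + 1) * (n + 1) ≤ ucard d C' * (n + 1) :=
      Nat.mul_le_mul_right _ hlt
    have h2 : (ucard d C'' + 1) * (n + 1) = ucard d C'' * (n + 1) + n + 1 := by ring
    rw [measCG, measCG]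
    omega
  · -- Case B : D > d + 1, the min cross distance decreases
    have hAdjB : ∀ x y : ↥C', (contactGraph C'' d).Adj (F x) (F y) → G.Adj x y := by
      rintro x y ⟨hne', hdd⟩
      have hdd' : hammingDist (f x) (f y) = d := hdd
      have hxy : x ≠ y := fun h => hne' (congrArg F h)
      refine (hAdjIff x y).mpr ⟨hxy, ?_⟩
      by_cases hx : Mv x <;> by_cases hy : Mv y
      · rw [← hsame x y (iff_of_true hx hy)]; exact hdd'
      · have := (hmix x y hx hy).1; omega
      · have h3 := (hmix y x hy hx).1
        rw [hammingDist_comm (f x) (f y)] at hdd'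
        omega
      · rw [← hsame x y (iff_of_false hx hy)]; exact hdd'
    let hIso : G ≃g contactGraph C'' d :=
      ⟨Equiv.ofBijective F ⟨hFinj, hFsurj⟩, fun {a b} => ⟨hAdjB a b, hAdjF a b⟩⟩
    have hRB : ∀ x y : ↥C', (contactGraph C'' d).Reachable (F x) (F y) → G.Reachable x y := by
      intro x y h
      exact (SimpleGraph.Iso.reachable_iff (φ := hIso) (u := x) (v := y)).mp h
    have hucard : ucard d C'' = ucard d C' := by
      rw [hU''card]
      congr 1
      exact Set.ext fun p => not_congr ⟨hRB p.1 p.2, hRmap p.1 p.2⟩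
    have hmem'' : D - 1 ∈ crossSet d C'' := by
      refine ⟨F u, F v, fun h => huv (hRB u v h), ?_⟩
      show hammingDist (f u) (f v) = D - 1
      rw [hfu, hfv]; omega
    have hmc'' : minCross d C'' ≤ D - 1 := Nat.sInf_le hmem''
    refine ⟨C'', hcard, hP'', ?_⟩
    rw [measCG, measCG, hucard, hminD]
    omega

end

/-- Every Hamming packing `C` with minimum distance exactly `d` can be transformed into a
code `C'` of the same cardinality and minimum distance ≥ d whose contact graph is connected. -/
theorem exists_equivalent_packing_connected_contactGraph {n : ℕ} (A : Fin n → Type)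
    [∀ j, Fintype (A j)] [∀ j, DecidableEq (A j)] (d : ℕ) (C : Finset (∀ j, A j))
    (hmin : ∀ a ∈ C, ∀ b ∈ C, a ≠ b → d ≤ hammingDist a b)
    (hsharp : ∃ a ∈ C, ∃ b ∈ C, a ≠ b ∧ hammingDist a b = d) :
    ∃ C' : Finset (∀ j, A j), C'.card = C.card ∧
      (∀ a ∈ C', ∀ b ∈ C', a ≠ b → d ≤ hammingDist a b) ∧
      (contactGraph C' d).Connected := by
  classical
  obtain ⟨a, ha, b, hb, hab, hdab⟩ := hsharp
  have hd : 0 < d := by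
    rcases Nat.eq_zero_or_pos d with h | h
    · exact absurd (hammingDist_eq_zero.1 (hdab.trans h)) hab
    · exact h
  have hCne : C.Nonempty := ⟨a, ha⟩
  -- strong induction on the measure
  suffices H : ∀ m : ℕ, ∀ C' : Finset (∀ j, A j), measCG d C' = m → C'.Nonempty →
      (∀ a ∈ C', ∀ b ∈ C', a ≠ b → d ≤ hammingDist a b) →
      ∃ C'' : Finset (∀ j, A j), C''.card = C'.card ∧
        (∀ a ∈ C'', ∀ b ∈ C'', a ≠ b → d ≤ hammingDist a b) ∧
        (contactGraph C'' d).Connected by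
    exact H (measCG d C) C rfl hCne hmin
  intro m
  induction m using Nat.strong_induction_on with
  | _ m IH =>
    intro C' hm hne hP
    by_cases hc : (contactGraph C' d).Connected
    · exact ⟨C', rfl, hP, hc⟩
    · obtain ⟨C'', hcard, hP'', hlt⟩ := step d hd C' hne hP hc
      have hne'' : C''.Nonempty := Finset.card_pos.1 (hcard ▸ Finset.card_pos.2 hne)
      obtain ⟨C₃, h1, h2, h3⟩ := IH (measCG d C'') (hm ▸ hlt) C'' rfl hne'' hP''
      exact ⟨C₃, h1.trans hcard, h2, h3⟩
end

section
/- Any code C in the binary-ternary mixed space (Fin 2)^4 × (Fin 3)^3 with minimum Hamming distance at least 3 and |C| ≥ 17 contains two codewords w, w' with d(w,w') = 3 and d^t(w,w') = 3, i.e., they agree on all binary coordinates and differ in all three ternary coordinates. -/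
/-- Any code in `(Fin 2)^4 × (Fin 3)^3` with minimum Hamming distance ≥ 3 and at least 17
codewords contains two codewords at distance exactly 3 that agree on all binary coordinates
and differ in all three ternary coordinates. -/
theorem exists_ternary_contact_pair (C : Finset ((Fin 4 → Fin 2) × (Fin 3 → Fin 3)))
    (hmin : ∀ a ∈ C, ∀ b ∈ C, a ≠ b → 3 ≤ hammingDist a.1 b.1 + hammingDist a.2 b.2)
    (hcard : 17 ≤ C.card) :
    ∃ w ∈ C, ∃ w' ∈ C, w ≠ w' ∧
      hammingDist w.1 w'.1 + hammingDist w.2 w'.2 = 3 ∧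
      w.1 = w'.1 ∧ hammingDist w.2 w'.2 = 3 := by
  have hlt : (Finset.univ : Finset (Fin 4 → Fin 2)).card * 1 < C.card := by
    simpa using lt_of_lt_of_le (by norm_num) hcard
  obtain ⟨y, -, hy⟩ := Finset.exists_lt_card_fiber_of_mul_lt_card_of_maps_to
    (f := fun w : (Fin 4 → Fin 2) × (Fin 3 → Fin 3) => w.1)
    (fun a _ => Finset.mem_univ a.1) hlt
  obtain ⟨w, hw, w', hw', hne⟩ := Finset.one_lt_card.mp hy
  simp only [Finset.mem_filter] at hw hw'
  refine ⟨w, hw.1, w', hw'.1, hne, ?_⟩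
  have h1 : w.1 = w'.1 := hw.2.trans hw'.2.symm
  have h0 : hammingDist w.1 w'.1 = 0 := by simp [h1]
  have h3 : 3 ≤ hammingDist w.2 w'.2 := by
    have := hmin w hw.1 w' hw'.1 hne
    omega
  have hle : hammingDist w.2 w'.2 ≤ 3 := by
    simpa using hammingDist_le_card_fintype (x := w.2) (y := w'.2)
  refine ⟨by omega, h1, by omega⟩
end

section
/- Let C be a code in a mixed Hamming space with minimum distance ≥ d. If C is partitioned into nonempty sets C₁ and C₂ with d(C₁, C₂) > d, then after applying a coordinate-symbol transposition to all of C₂ as in the contact-graph algorithm (swapping symbols w[j] and w'[j] at a coordinate j where a closest pair w ∈ C₁, w' ∈ C₂ differs), the union C₁ ∪ σ(C₂) still has minimum distance ≥ d and cardinality |C|. -/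
section Aux

variable {n : ℕ} {A : Fin n → Type} [∀ j, Fintype (A j)] [∀ j, DecidableEq (A j)]

private lemma sigma_inj (j : Fin n) (e : A j ≃ A j) :
    Function.Injective (fun v : ∀ i, A i => Function.update v j (e (v j))) := by
  intro u v h
  simp only at h
  funext i
  by_cases hij : i = j
  · subst hij
    have := congrFun h i
    simp only [Function.update_self] at this
    exact e.injective this
  · have := congrFun h i
    simpa [Function.update_of_ne hij] using this

private lemma sigma_isom (j : Fin n) (e : A j ≃ A j) (u v : ∀ i, A i) :
    hammingDist (Function.update u j (e (u j))) (Function.update v j (e (v j)))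
      = hammingDist u v := by
  unfold hammingDist
  congr 1
  apply Finset.filter_congr
  intro i _
  by_cases hij : i = j
  · subst hij
    simp [e.injective.ne_iff]
  · simp [Function.update_of_ne hij]

private lemma dist_update_le (j : Fin n) (v : ∀ i, A i) (x : A j) :
    hammingDist v (Function.update v j x) ≤ 1 := by
  unfold hammingDist
  calc (Finset.univ.filter fun i => v i ≠ Function.update v j x i).card
      ≤ ({j} : Finset (Fin n)).card := by
        apply Finset.card_le_card
        intro i hi
        simp only [Finset.mem_filter] at hi
        simp only [Finset.mem_singleton]
        by_contra hij
        exact hi.2 (by simp [Function.update_of_ne hij])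
    _ = 1 := Finset.card_singleton j

end Aux

/-- If a code `C₁ ⊎ C₂` has minimum distance ≥ d and the cross distance between `C₁` and
`C₂` exceeds `d`, then applying to all of `C₂` the transposition swapping the symbols
`w j` and `w' j` at a coordinate `j` where a closest cross pair `w ∈ C₁`, `w' ∈ C₂`
differs preserves the cardinality and keeps minimum distance ≥ d. -/
theorem swap_step_preserves_code {n : ℕ} (A : Fin n → Type) [∀ j, Fintype (A j)]
    [∀ j, DecidableEq (A j)] (d d' : ℕ) (hd : 1 ≤ d) (hdd' : d < d')
    (C₁ C₂ : Finset (∀ j, A j)) (hdisj : Disjoint C₁ C₂)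
    (h₁ : C₁.Nonempty) (h₂ : C₂.Nonempty)
    (hmin : ∀ a ∈ C₁ ∪ C₂, ∀ b ∈ C₁ ∪ C₂, a ≠ b → d ≤ hammingDist a b)
    (hlow : ∀ u ∈ C₁, ∀ v ∈ C₂, d' ≤ hammingDist u v)
    (w : ∀ j, A j) (hw : w ∈ C₁) (w' : ∀ j, A j) (hw' : w' ∈ C₂)
    (hww' : hammingDist w w' = d') (j : Fin n) (hj : w j ≠ w' j) :
    (C₁ ∪ C₂.image (fun v => Function.update v j (Equiv.swap (w j) (w' j) (v j)))).card
        = (C₁ ∪ C₂).card ∧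
    ∀ a ∈ C₁ ∪ C₂.image (fun v => Function.update v j (Equiv.swap (w j) (w' j) (v j))),
      ∀ b ∈ C₁ ∪ C₂.image (fun v => Function.update v j (Equiv.swap (w j) (w' j) (v j))),
        a ≠ b → d ≤ hammingDist a b := by
  set e := Equiv.swap (w j) (w' j)
  set σ := fun v : ∀ i, A i => Function.update v j (e (v j)) with hσ
  -- cross distance after the swap
  have hcross : ∀ u ∈ C₁, ∀ v ∈ C₂, d ≤ hammingDist u (σ v) := by
    intro u hu v hv
    have h1 : hammingDist u v ≤ hammingDist u (σ v) + hammingDist (σ v) v :=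
      hammingDist_triangle u (σ v) v
    have h2 : hammingDist (σ v) v ≤ 1 := by
      rw [hammingDist_comm]; exact dist_update_le j v _
    have hlo := hlow u hu v hv
    omega
  have hdisj2 : Disjoint C₁ (C₂.image σ) := by
    rw [Finset.disjoint_left]
    intro a ha hb
    obtain ⟨v, hv, rfl⟩ := Finset.mem_image.mp hb
    have := hcross _ ha v hv
    simp at this
    omega
  constructor
  · rw [Finset.card_union_of_disjoint hdisj2, Finset.card_union_of_disjoint hdisj,
      Finset.card_image_of_injective _ (sigma_inj j e)]
  · intro a ha b hb hab
    rcases Finset.mem_union.mp ha with ha1 | ha2 <;>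
      rcases Finset.mem_union.mp hb with hb1 | hb2
    · exact hmin a (Finset.mem_union_left _ ha1) b (Finset.mem_union_left _ hb1) hab
    · obtain ⟨v, hv, rfl⟩ := Finset.mem_image.mp hb2
      exact hcross a ha1 v hv
    · obtain ⟨v, hv, rfl⟩ := Finset.mem_image.mp ha2
      rw [hammingDist_comm]
      exact hcross b hb1 v hv
    · obtain ⟨v, hv, rfl⟩ := Finset.mem_image.mp ha2
      obtain ⟨u, hu, rfl⟩ := Finset.mem_image.mp hb2
      rw [hσ]
      simp only
      rw [sigma_isom j e]
      exact hmin v (Finset.mem_union_right _ hv) u (Finset.mem_union_right _ hu)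
        (fun h => hab (by rw [h]))
end

section
/- In the mixed space Fin 3 × (Fin 2)^7 with distance d = 3, any code of minimum distance ≥ 3 in which no two codewords w, w' satisfy d(w,w') = 3 with all 3 disagreements in binary coordinates has cardinality at most 24. (Computational bound; the relaxed constraint graph's independence number is 24.) -/
open Finset


private lemma fin2_cases : ∀ a : Fin 2, a = 0 ∨ a = 1 := by decide

private lemma arith1 (a n : ℕ) (h : a ≤ n) :
    2 * (a * (n - a) + (n - a) * a) ≤ n * n := by
  obtain ⟨b, rfl⟩ := Nat.exists_eq_add_of_le h
  have e : a + b - a = b := by omega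
  rw [e]
  nlinarith [two_mul_le_add_sq a b]

private lemma arith2 (M T : ℕ) (h1 : M * (M * 4 - 4) ≤ T) (h2 : 2 * T ≤ 7 * (M * M)) :
    M ≤ 8 := by
  rcases Nat.eq_zero_or_pos M with h0 | h0
  · omega
  · obtain ⟨k, rfl⟩ : ∃ k, M = k + 1 := ⟨M - 1, by omega⟩
    have e : (k + 1) * 4 - 4 = k * 4 := by omega
    rw [e] at h1
    nlinarith

-- per-coordinate counting
lemma coord_sum (S : Finset (Fin 7 → Fin 2)) (i : Fin 7) :
    2 * (∑ x ∈ S, ∑ y ∈ S, (if x i = y i then 0 else 1)) ≤ S.card * S.card := by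
  classical
  have hsplit : ∀ x ∈ S, (∑ y ∈ S, (if x i = y i then 0 else 1))
      = if x i = 0 then S.card - (S.filter (fun x => x i = 0)).card
        else (S.filter (fun x => x i = 0)).card := by
    intro x hx
    have e1 : (∑ y ∈ S, (if x i = y i then 0 else 1))
        = (S.filter (fun y => ¬ (x i = y i))).card := by
      rw [Finset.card_filter]
      exact Finset.sum_congr rfl (by intro y _; by_cases hxy : x i = y i <;> simp [hxy])
    rcases fin2_cases (x i) with hx0 | hx1
    · rw [if_pos hx0, e1]
      have e2 : S.filter (fun y => ¬ (x i = y i)) = S.filter (fun y => ¬ (y i = 0)) := by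
        apply Finset.filter_congr; intro y _
        rw [hx0]
        exact ⟨fun h1 h2 => h1 h2.symm, fun h1 h2 => h1 h2.symm⟩
      rw [e2, Finset.filter_not, Finset.card_sdiff_of_subset (Finset.filter_subset _ _)]
    · have hx0 : ¬ (x i = 0) := by rw [hx1]; decide
      rw [if_neg hx0, e1]
      have e2 : S.filter (fun y => ¬ (x i = y i)) = S.filter (fun y => y i = 0) := by
        apply Finset.filter_congr; intro y _
        rw [hx1]
        rcases fin2_cases (y i) with h2 | h2 <;> rw [h2] <;> simp
      rw [e2]
  rw [Finset.sum_congr rfl hsplit]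
  rw [← Finset.sum_filter_add_sum_filter_not S (fun x => x i = 0)]
  rw [Finset.sum_congr rfl (fun x hx => if_pos (Finset.mem_filter.mp hx).2)]
  rw [Finset.sum_congr rfl (fun x hx => if_neg (Finset.mem_filter.mp hx).2)]
  rw [Finset.sum_const, Finset.sum_const, smul_eq_mul, smul_eq_mul]
  rw [Finset.filter_not, Finset.card_sdiff_of_subset (Finset.filter_subset _ _)]
  exact arith1 _ _ (Finset.card_filter_le _ _)

lemma plotkin (S : Finset (Fin 7 → Fin 2))
    (h : ∀ x ∈ S, ∀ y ∈ S, x ≠ y → 4 ≤ hammingDist x y) : S.card ≤ 8 := by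
  classical
  have hlow : ∀ x ∈ S, S.card * 4 - 4 ≤ ∑ y ∈ S, hammingDist x y := by
    intro x hx
    have e : ∑ y ∈ S, hammingDist x y = ∑ y ∈ S.erase x, hammingDist x y := by
      rw [← Finset.add_sum_erase S _ hx, hammingDist_self, zero_add]
    rw [e]
    calc S.card * 4 - 4 = (S.card - 1) * 4 := by omega
    _ = (S.erase x).card * 4 := by rw [Finset.card_erase_of_mem hx]
    _ ≤ ∑ y ∈ S.erase x, hammingDist x y := by
        rw [← Finset.sum_const_nat (m := 4) (fun y _ => rfl)]
        exact Finset.sum_le_sum (fun y hy => h x hx y (Finset.mem_of_mem_erase hy)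
          (fun e => (Finset.ne_of_mem_erase hy) e.symm))
  have hT : S.card * (S.card * 4 - 4) ≤ ∑ x ∈ S, ∑ y ∈ S, hammingDist x y := by
    calc S.card * (S.card * 4 - 4) = ∑ _x ∈ S, (S.card * 4 - 4) := by
          rw [Finset.sum_const, smul_eq_mul]
    _ ≤ _ := Finset.sum_le_sum hlow
  have hd : ∀ x y : Fin 7 → Fin 2,
      hammingDist x y = ∑ i : Fin 7, (if x i = y i then 0 else 1) := by
    intro x y
    rw [hammingDist, Finset.card_filter]
    exact Finset.sum_congr rfl (by intro i _; by_cases hxy : x i = y i <;> simp [hxy])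
  have hswap : (∑ x ∈ S, ∑ y ∈ S, hammingDist x y)
      = ∑ i : Fin 7, ∑ x ∈ S, ∑ y ∈ S, (if x i = y i then 0 else 1) := by
    simp_rw [hd]
    rw [show (∑ x ∈ S, ∑ y ∈ S, ∑ i : Fin 7, (if x i = y i then 0 else 1))
        = ∑ x ∈ S, ∑ i : Fin 7, ∑ y ∈ S, (if x i = y i then 0 else 1) from
      Finset.sum_congr rfl (fun x _ => Finset.sum_comm)]
    exact Finset.sum_comm
  have hup : 2 * (∑ x ∈ S, ∑ y ∈ S, hammingDist x y) ≤ 7 * (S.card * S.card) := by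
    rw [hswap, Finset.mul_sum]
    calc ∑ i : Fin 7, 2 * (∑ x ∈ S, ∑ y ∈ S, (if x i = y i then 0 else 1))
        ≤ ∑ _i : Fin 7, S.card * S.card := Finset.sum_le_sum (fun i _ => coord_sum S i)
    _ = 7 * (S.card * S.card) := by rw [Finset.sum_const]; simp [mul_comm]
  exact arith2 S.card _ hT hup

/-- In `Fin 3 × (Fin 2)^7` with `d = 3`: any code of minimum distance ≥ 3 with no pair of
codewords at distance exactly 3 whose 3 disagreements are all at binary coordinates has at
most 24 codewords. -/
theorem card_le_24_of_no_binary_contact_pair (C : Finset (Fin 3 × (Fin 7 → Fin 2)))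
    (hmin : ∀ a ∈ C, ∀ b ∈ C, a ≠ b →
      3 ≤ (if a.1 = b.1 then 0 else 1) + hammingDist a.2 b.2)
    (hno : ∀ a ∈ C, ∀ b ∈ C,
      ¬ ((if a.1 = b.1 then 0 else 1) + hammingDist a.2 b.2 = 3 ∧
          hammingDist a.2 b.2 = 3)) :
    C.card ≤ 24 := by
  classical
  have key : ∀ a ∈ C, ∀ b ∈ C, a ≠ b → a.1 = b.1 → 4 ≤ hammingDist a.2 b.2 := by
    intro a ha b hb hab h1
    have hm := hmin a ha b hb hab
    rw [if_pos h1, zero_add] at hm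
    have hn := hno a ha b hb
    rw [if_pos h1, zero_add] at hn
    rcases Nat.lt_or_ge (hammingDist a.2 b.2) 4 with h | h
    · exact absurd ⟨by omega, by omega⟩ hn
    · exact h
  rw [Finset.card_eq_sum_card_fiberwise (f := Prod.fst) (t := Finset.univ)
    (fun x _ => Finset.mem_univ _)]
  have hfib : ∀ t : Fin 3, (C.filter (fun x => x.1 = t)).card ≤ 8 := by
    intro t
    set F := C.filter (fun x => x.1 = t) with hF
    have hinj : Set.InjOn Prod.snd (F : Set (Fin 3 × (Fin 7 → Fin 2))) := by
      intro a ha b hb hab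
      have ha' := Finset.mem_filter.mp ha
      have hb' := Finset.mem_filter.mp hb
      exact Prod.ext (ha'.2.trans hb'.2.symm) hab
    have hcard : F.card = (F.image Prod.snd).card :=
      (Finset.card_image_of_injOn hinj).symm
    rw [hcard]
    apply plotkin
    intro x hx y hy hxy
    obtain ⟨a, ha, rfl⟩ := Finset.mem_image.mp hx
    obtain ⟨b, hb, rfl⟩ := Finset.mem_image.mp hy
    have ha' := Finset.mem_filter.mp ha
    have hb' := Finset.mem_filter.mp hb
    exact key a ha'.1 b hb'.1 (fun e => hxy (congrArg Prod.snd e))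
      (ha'.2.trans hb'.2.symm)
  calc ∑ t : Fin 3, (C.filter (fun x => x.1 = t)).card
      ≤ ∑ _t : Fin 3, 8 := Finset.sum_le_sum (fun t _ => hfib t)
  _ = 24 := by simp
end
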